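/- Let (X,d) be a compact metric space such that any two points of X are joined by a rectifiable path, i.e., a continuous map γ : [0,1] → X of finite length, the length being the total variation ℓ(γ) = sup { ∑_{i=1}^{n} d(γ(t_{i−1}), γ(t_i)) : 0 = t_0 < t_1 < ⋯ < t_n = 1 }. Then for every x,y ∈ X there exists a path from x to y whose length equals the infimum of the lengths of all paths from x to y. Consequently, defining d'(x,y) to be this infimum, (X,d') is a geodesic space: any two points are joined by a path whose length (computed with respect to d', and equal to its length with respect to d) equals d'(x,y). -/

import Mathlib

open Set
open scoped ENNReal

noncomputable section

namespace IntrinsicMetric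

/-- A continuous path on `[0,1]` from `x` to `y`. -/
def IsPath (X : Type*) [MetricSpace X] (γ : ℝ → X) (x y : X) : Prop :=
  ContinuousOn γ (Set.Icc 0 1) ∧ γ 0 = x ∧ γ 1 = y

/-- The total variation of `γ` on `s` computed with respect to an arbitrary
(extended-real-valued) distance function `D`. -/
def variationWith {X : Type*} (D : X → X → ℝ≥0∞) (γ : ℝ → X) (s : Set ℝ) : ℝ≥0∞ :=
  ⨆ p : ℕ × { u : ℕ → ℝ // Monotone u ∧ ∀ i, u i ∈ s },
    ∑ i ∈ Finset.range p.1, D (γ (p.2.1 i)) (γ (p.2.1 (i + 1)))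

/-- The intrinsic metric associated with `d`: the infimum of lengths of paths
from `x` to `y`. -/
def intrinsicDist (X : Type*) [MetricSpace X] (x y : X) : ℝ≥0∞ :=
  ⨅ γ : { γ : ℝ → X // IsPath X γ x y }, eVariationOn γ.1 (Set.Icc 0 1)

open Filter Topology
open scoped NNReal

section Aux

set_option maxHeartbeats 1000000

variable {X : Type*} [MetricSpace X]

private lemma Icc_add_Icc' (f : ℝ → X) {a b c : ℝ} (hab : a ≤ b) (hbc : b ≤ c) :
    eVariationOn f (Icc a b) + eVariationOn f (Icc b c) = eVariationOn f (Icc a c) := by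
  have h := eVariationOn.Icc_add_Icc f (s := univ) hab hbc (mem_univ b)
  simpa using h


private lemma no_jump_right {γ : ℝ → X} {a c : ℝ} (hac : a < c)
    (hcont : ContinuousWithinAt γ (Icc a c) a)
    (hfin : eVariationOn γ (Icc a c) ≠ ⊤) {ε : ℝ≥0∞} (hε : ε ≠ 0) :
    ∃ b ∈ Ioc a c, eVariationOn γ (Icc a b) ≤ ε := by
  by_contra hcon
  push_neg at hcon
  have hεtop : ε ≠ ⊤ := (hcon c ⟨hac, le_rfl⟩).ne_top
  set η : ℝ≥0∞ := ε / 2 / 2 with hη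
  have hη0 : η ≠ 0 := by
    have := ENNReal.half_pos (a := ε / 2) (ENNReal.half_pos hε).ne'
    exact this.ne'
  have hηε : η ≤ ε := ENNReal.half_le_self.trans ENNReal.half_le_self
  have hηtop : η ≠ ⊤ := by
    intro h; exact hεtop (top_le_iff.mp (h ▸ hηε))
  -- continuity: get b₁
  have hηr : 0 < η.toReal := ENNReal.toReal_pos hη0 hηtop
  obtain ⟨d, hd0, hd⟩ := Metric.continuousWithinAt_iff.mp hcont η.toReal hηr
  set b₁ : ℝ := min c (a + d / 2) with hb₁def
  have hab₁ : a < b₁ := lt_min hac (by linarith)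
  have hb₁c : b₁ ≤ c := min_le_left _ _
  have hosc : ∀ s ∈ Icc a b₁, edist (γ s) (γ a) ≤ η := by
    intro s hs
    have hsc : s ∈ Icc a c := ⟨hs.1, hs.2.trans hb₁c⟩
    have hdist : dist s a < d := by
      rw [Real.dist_eq, abs_of_nonneg (by linarith [hs.1])]
      have : s ≤ a + d / 2 := hs.2.trans (min_le_right _ _)
      linarith
    have := hd hsc hdist
    rw [edist_dist]
    exact le_of_lt (by
      calc ENNReal.ofReal (dist (γ s) (γ a)) < ENNReal.ofReal η.toReal :=
        ENNReal.ofReal_lt_ofReal_iff hηr |>.mpr this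
      _ = η := ENNReal.ofReal_toReal hηtop)
  set V₁ : ℝ≥0∞ := eVariationOn γ (Icc a b₁) with hV₁def
  have hV₁fin : V₁ ≠ ⊤ := by
    intro h
    exact hfin (top_le_iff.mp (h ▸ eVariationOn.mono γ (Icc_subset_Icc le_rfl hb₁c)))
  have hεV : ε < V₁ := hcon b₁ ⟨hab₁, hb₁c⟩
  have hV₁0 : V₁ ≠ 0 := fun h => by rw [h] at hεV; exact ENNReal.not_lt_zero hεV
  have hlt : V₁ - η < V₁ := ENNReal.sub_lt_self hV₁fin hV₁0 hη0
  rw [hV₁def, eVariationOn] at hlt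
  obtain ⟨⟨n, u, hu, hus⟩, hsum⟩ := lt_iSup_iff.mp hlt
  simp only at hsum
  have hηV : η ≤ V₁ := hηε.trans hεV.le
  have hVsum : V₁ < (∑ i ∈ Finset.range n, edist (γ (u (i + 1))) (γ (u i))) + η := by
    have h1 : V₁ = V₁ - η + η := (tsub_add_cancel_of_le hηV).symm
    calc V₁ = V₁ - η + η := h1
    _ < _ := (ENNReal.add_lt_add_iff_right hηtop).mpr hsum
  by_cases hex : ∃ i, a < u i
  · set m := Nat.find hex with hm
    have hum : a < u m := Nat.find_spec hex
    have hum_mem : u m ∈ Icc a b₁ := hus m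
    have hbelow : ∀ i, i < m → u i = a := fun i hi =>
      le_antisymm (not_lt.mp (Nat.find_min hex hi)) (hus i).1
    set u' : ℕ → ℝ := fun i => max (u i) (u m) with hu'
    have key : ∀ i, edist (γ (u (i + 1))) (γ (u i)) ≤
        edist (γ (u' (i + 1))) (γ (u' i)) + (if i + 1 = m then η else 0) := by
      intro i
      rcases lt_trichotomy (i + 1) m with h | h | h
      · have h1 : u (i + 1) = a := hbelow _ h
        have h2 : u i = a := hbelow _ (lt_trans (Nat.lt_succ_self i) h)
        simp [h1, h2]
      · have h2 : u i = a := hbelow _ (h ▸ Nat.lt_succ_self i)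
        have h1 : u (i + 1) = u m := by rw [h]
        rw [h1, h2, if_pos h]
        have e1 : u' (i + 1) = u m := by
          simp only [hu', h1, max_self]
        have e2 : u' i = u m := by
          simp only [hu', h2, max_eq_right hum.le]
        rw [e1, e2, edist_self, zero_add]
        exact hosc (u m) hum_mem
      · have him : m ≤ i := Nat.lt_succ_iff.mp h
        have e1 : u' (i + 1) = u (i + 1) := max_eq_left (hu (him.trans (Nat.le_succ i)))
        have e2 : u' i = u i := max_eq_left (hu him)
        rw [e1, e2, if_neg (by omega), add_zero]
    have hS' : (∑ i ∈ Finset.range n, edist (γ (u' (i + 1))) (γ (u' i))) ≤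
        eVariationOn γ (Icc (u m) b₁) := by
      apply eVariationOn.sum_le (f := γ) (n := n)
      · exact hu.max monotone_const
      · intro i
        exact ⟨le_max_right _ _, max_le (hus i).2 hum_mem.2⟩
    have hind : (∑ i ∈ Finset.range n, (if i + 1 = m then η else 0)) ≤ η := by
      rcases Nat.eq_zero_or_pos m with hm0 | hm0
      · rw [Finset.sum_eq_zero (fun i _ => by simp [hm0])]
        exact zero_le
      · obtain ⟨k, hk⟩ := Nat.exists_eq_succ_of_ne_zero hm0.ne'
        have : ∀ i ∈ Finset.range n, (if i + 1 = m then η else 0) =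
            (if i = k then η else 0) := by
          intro i _
          rw [hk]
          simp [Nat.add_right_cancel_iff]
        rw [Finset.sum_congr rfl this, Finset.sum_ite_eq' (Finset.range n) k (fun _ => η)]
        split_ifs <;> simp
    have hSle : (∑ i ∈ Finset.range n, edist (γ (u (i + 1))) (γ (u i))) ≤
        eVariationOn γ (Icc (u m) b₁) + η := by
      calc (∑ i ∈ Finset.range n, edist (γ (u (i + 1))) (γ (u i)))
          ≤ ∑ i ∈ Finset.range n, (edist (γ (u' (i + 1))) (γ (u' i)) +
            (if i + 1 = m then η else 0)) := Finset.sum_le_sum (fun i _ => key i)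
        _ = (∑ i ∈ Finset.range n, edist (γ (u' (i + 1))) (γ (u' i))) +
            (∑ i ∈ Finset.range n, (if i + 1 = m then η else 0)) := Finset.sum_add_distrib
        _ ≤ eVariationOn γ (Icc (u m) b₁) + η := add_le_add hS' hind
    set E := eVariationOn γ (Icc (u m) b₁) with hE
    have hsplit : eVariationOn γ (Icc a (u m)) + E = V₁ := Icc_add_Icc' γ hum.le hum_mem.2
    have hEfin : E ≠ ⊤ := by
      intro h
      rw [h, add_top] at hsplit
      exact hV₁fin hsplit.symm
    have h1 : ε + E < eVariationOn γ (Icc a (u m)) + E :=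
      (ENNReal.add_lt_add_iff_right hEfin).mpr (hcon (u m) ⟨hum, hum_mem.2.trans hb₁c⟩)
    have h2 : V₁ < E + (η + η) := by
      calc V₁ < (∑ i ∈ Finset.range n, edist (γ (u (i + 1))) (γ (u i))) + η := hVsum
        _ ≤ (E + η) + η := add_le_add_left hSle η
        _ = E + (η + η) := add_assoc _ _ _
    have hηη : η + η = ε / 2 := ENNReal.add_halves (ε / 2)
    have : ε + E < ε / 2 + E := by
      calc ε + E < eVariationOn γ (Icc a (u m)) + E := h1
        _ = V₁ := hsplit
        _ < E + (η + η) := h2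
        _ = ε / 2 + E := by rw [hηη, add_comm]
    have : ε < ε / 2 := (ENNReal.add_lt_add_iff_right hEfin).mp this
    exact not_le.mpr this ENNReal.half_le_self
  · push_neg at hex
    have hzero : (∑ i ∈ Finset.range n, edist (γ (u (i + 1))) (γ (u i))) = 0 :=
      Finset.sum_eq_zero fun i _ => by
        have h1 : u (i + 1) = a := le_antisymm (hex _) (hus _).1
        have h2 : u i = a := le_antisymm (hex _) (hus _).1
        rw [h1, h2, edist_self]
    rw [hzero, zero_add] at hVsum
    exact (hVsum.trans_le (hηε.trans hεV.le)).false

private lemma no_jump_left {γ : ℝ → X} {a c : ℝ} (hac : a < c)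
    (hcont : ContinuousWithinAt γ (Icc a c) c)
    (hfin : eVariationOn γ (Icc a c) ≠ ⊤) {ε : ℝ≥0∞} (hε : ε ≠ 0) :
    ∃ b ∈ Ico a c, eVariationOn γ (Icc b c) ≤ ε := by
  set σ : ℝ → ℝ := fun t => a + c - t with hσ
  have hσanti : ∀ s : Set ℝ, AntitoneOn σ s := fun s p _ q _ hpq => by
    simp only [hσ]; linarith
  have hσmaps : ∀ p q : ℝ, MapsTo σ (Icc p q) (Icc (a + c - q) (a + c - p)) := by
    intro p q t ht
    exact ⟨by simp only [hσ]; linarith [ht.2], by simp only [hσ]; linarith [ht.1]⟩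
  have hσsurj : ∀ p q : ℝ, SurjOn σ (Icc p q) (Icc (a + c - q) (a + c - p)) := by
    intro p q t ht
    refine ⟨a + c - t, ⟨?_, ?_⟩, ?_⟩
    · linarith [ht.2]
    · linarith [ht.1]
    · show a + c - (a + c - t) = t
      ring
  have himg : ∀ p q : ℝ, σ '' Icc p q = Icc (a + c - q) (a + c - p) := fun p q =>
    Subset.antisymm ((hσmaps p q).image_subset) (hσsurj p q)
  have hvar : ∀ p q : ℝ,
      eVariationOn (γ ∘ σ) (Icc p q) = eVariationOn γ (Icc (a + c - q) (a + c - p)) := by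
    intro p q
    rw [eVariationOn.comp_eq_of_antitoneOn γ σ (hσanti (Icc p q)), himg]
  have hvar0 : eVariationOn (γ ∘ σ) (Icc a c) = eVariationOn γ (Icc a c) := by
    have := hvar a c
    rw [show a + c - c = a by ring, show a + c - a = c by ring] at this
    exact this
  have hcont' : ContinuousWithinAt (γ ∘ σ) (Icc a c) a := by
    have hσc : ContinuousWithinAt σ (Icc a c) a :=
      ((continuous_const.sub continuous_id).continuousWithinAt)
    have hσa : σ a = c := by simp [hσ]
    apply ContinuousWithinAt.comp (hσa ▸ hcont) hσc
    intro t ht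
    exact ⟨by simp only [hσ]; linarith [ht.2], by simp only [hσ]; linarith [ht.1]⟩
  obtain ⟨b, hb, hble⟩ := no_jump_right hac hcont' (hvar0 ▸ hfin) hε
  have h2 := hvar a b
  rw [show a + c - a = c by ring] at h2
  rw [h2] at hble
  exact ⟨a + c - b, ⟨by linarith [hb.2], by linarith [hb.1]⟩, hble⟩


private lemma continuousOn_varFun {γ : ℝ → X} (hγ : ContinuousOn γ (Icc 0 1))
    (hfin : eVariationOn γ (Icc 0 1) ≠ ⊤) :
    ContinuousOn (fun b => (eVariationOn γ (Icc 0 b)).toReal) (Icc (0:ℝ) 1) := by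
  have hsubfin : ∀ {p q : ℝ}, 0 ≤ p → q ≤ 1 → eVariationOn γ (Icc p q) ≠ ⊤ := by
    intro p q hp hq h
    rcases le_total p q with hpq | hpq
    · exact hfin (top_le_iff.mp (h ▸ eVariationOn.mono γ (Icc_subset_Icc hp hq)))
    · rw [eVariationOn.subsingleton γ (Set.subsingleton_Icc_of_ge hpq)] at h
      exact ENNReal.zero_ne_top h
  intro a ha
  rw [Metric.continuousWithinAt_iff]
  intro ε hε
  have hε2 : ENNReal.ofReal (ε / 2) ≠ 0 := (ENNReal.ofReal_pos.2 (half_pos hε)).ne'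
  obtain ⟨δ₁, hδ₁pos, hδ₁⟩ : ∃ δ > (0:ℝ), ∀ b ∈ Icc (0:ℝ) 1, a ≤ b → b - a < δ →
      eVariationOn γ (Icc a b) ≤ ENNReal.ofReal (ε / 2) := by
    rcases lt_or_eq_of_le ha.2 with h | h
    · obtain ⟨bb, hbb, hvar⟩ := no_jump_right h
        ((hγ a ha).mono (Icc_subset_Icc ha.1 le_rfl))
        (hsubfin ha.1 le_rfl) hε2
      exact ⟨bb - a, sub_pos.2 hbb.1, fun b hb hab hlt =>
        le_trans (eVariationOn.mono γ (Icc_subset_Icc le_rfl (by linarith))) hvar⟩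
    · refine ⟨1, one_pos, fun b hb hab _ => ?_⟩
      have : b = a := le_antisymm (hb.2.trans h.ge) hab
      rw [this, eVariationOn.subsingleton γ (by rw [Icc_self]; exact subsingleton_singleton)]
      exact zero_le
  obtain ⟨δ₂, hδ₂pos, hδ₂⟩ : ∃ δ > (0:ℝ), ∀ b ∈ Icc (0:ℝ) 1, b ≤ a → a - b < δ →
      eVariationOn γ (Icc b a) ≤ ENNReal.ofReal (ε / 2) := by
    rcases lt_or_eq_of_le ha.1 with h | h
    · obtain ⟨bb, hbb, hvar⟩ := no_jump_left h
        ((hγ a ha).mono (Icc_subset_Icc le_rfl ha.2))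
        (hsubfin le_rfl ha.2) hε2
      exact ⟨a - bb, sub_pos.2 hbb.2, fun b hb hab hlt =>
        le_trans (eVariationOn.mono γ (Icc_subset_Icc (by linarith) le_rfl)) hvar⟩
    · refine ⟨1, one_pos, fun b hb hab _ => ?_⟩
      have : b = a := le_antisymm hab (h ▸ hb.1)
      rw [this, eVariationOn.subsingleton γ (by rw [Icc_self]; exact subsingleton_singleton)]
      exact zero_le
  refine ⟨min δ₁ δ₂, lt_min hδ₁pos hδ₂pos, fun b hb hdist => ?_⟩
  rcases le_total a b with hab | hab
  · have hsplit := Icc_add_Icc' γ ha.1 hab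
    have heq : (eVariationOn γ (Icc 0 b)).toReal =
        (eVariationOn γ (Icc 0 a)).toReal + (eVariationOn γ (Icc a b)).toReal := by
      rw [← ENNReal.toReal_add (hsubfin le_rfl ha.2) (hsubfin ha.1 hb.2), hsplit]
    have hbound : (eVariationOn γ (Icc a b)).toReal ≤ ε / 2 := by
      apply ENNReal.toReal_le_of_le_ofReal (le_of_lt (half_pos hε))
      apply hδ₁ b hb hab
      calc b - a ≤ |b - a| := le_abs_self _
        _ < min δ₁ δ₂ := by rwa [Real.dist_eq] at hdist
        _ ≤ δ₁ := min_le_left _ _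
    show |(eVariationOn γ (Icc 0 b)).toReal - (eVariationOn γ (Icc 0 a)).toReal| < ε
    rw [heq, add_sub_cancel_left, abs_of_nonneg ENNReal.toReal_nonneg]
    linarith
  · have hsplit := Icc_add_Icc' γ hb.1 hab
    have heq : (eVariationOn γ (Icc 0 a)).toReal =
        (eVariationOn γ (Icc 0 b)).toReal + (eVariationOn γ (Icc b a)).toReal := by
      rw [← ENNReal.toReal_add (hsubfin le_rfl hb.2) (hsubfin hb.1 ha.2), hsplit]
    have hbound : (eVariationOn γ (Icc b a)).toReal ≤ ε / 2 := by
      apply ENNReal.toReal_le_of_le_ofReal (le_of_lt (half_pos hε))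
      apply hδ₂ b hb hab
      calc a - b ≤ |b - a| := by rw [abs_sub_comm]; exact le_abs_self _
        _ < min δ₁ δ₂ := by rwa [Real.dist_eq] at hdist
        _ ≤ δ₂ := min_le_right _ _
    show |(eVariationOn γ (Icc 0 b)).toReal - (eVariationOn γ (Icc 0 a)).toReal| < ε
    rw [heq, show (eVariationOn γ (Icc 0 b)).toReal - ((eVariationOn γ (Icc 0 b)).toReal +
      (eVariationOn γ (Icc b a)).toReal) = -(eVariationOn γ (Icc b a)).toReal by ring,
      abs_neg, abs_of_nonneg ENNReal.toReal_nonneg]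
    linarith

private lemma exists_lipschitz_path {γ : ℝ → X} {x y : X} (hp : IsPath X γ x y)
    (hfin : eVariationOn γ (Set.Icc 0 1) ≠ ⊤) :
    ∃ δ : ℝ → X, LipschitzWith (eVariationOn γ (Set.Icc 0 1)).toNNReal δ ∧ δ 0 = x ∧ δ 1 = y ∧
      eVariationOn δ (Set.Icc 0 1) ≤ eVariationOn γ (Set.Icc 0 1) := by
  set s : Set ℝ := Set.Icc 0 1 with hs
  have h01 : (0:ℝ) ∈ s := ⟨le_rfl, zero_le_one⟩
  have h11 : (1:ℝ) ∈ s := ⟨zero_le_one, le_rfl⟩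
  have hbv : BoundedVariationOn γ s := hfin
  have hlbv : LocallyBoundedVariationOn γ s := hbv.locallyBoundedVariationOn
  set ℓ : ℝ≥0∞ := eVariationOn γ s with hℓ
  set ℓr : ℝ := ℓ.toReal with hℓr
  have hℓr0 : 0 ≤ ℓr := ENNReal.toReal_nonneg
  set v : ℝ → ℝ := variationOnFromTo γ s 0 with hv
  have hv_eq : EqOn v (fun b => (eVariationOn γ (Icc 0 b)).toReal) s := by
    intro b hb
    show variationOnFromTo γ s 0 b = _
    rw [variationOnFromTo.eq_of_le γ s hb.1]
    congr 2
    exact inter_eq_self_of_subset_right (Icc_subset_Icc le_rfl hb.2)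
  have hv0 : v 0 = 0 := variationOnFromTo.self γ s 0
  have hv1 : v 1 = ℓr := by
    rw [hv_eq h11]
  have hvcont : ContinuousOn v s := (continuousOn_varFun hp.1 hfin).congr hv_eq
  have hmaps : MapsTo v s (Icc 0 ℓr) := by
    intro b hb
    constructor
    · exact variationOnFromTo.nonneg_of_le γ s hb.1
    · rw [hv_eq hb]
      exact ENNReal.toReal_mono hfin (eVariationOn.mono γ (Icc_subset_Icc le_rfl hb.2))
  have himg : v '' s = Icc 0 ℓr := by
    apply Subset.antisymm hmaps.image_subset
    have := intermediate_value_Icc (zero_le_one (α := ℝ)) hvcont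
    rw [hv0, hv1] at this
    exact this
  set g : ℝ → X := naturalParameterization γ s 0 with hg
  have hgv : ∀ b ∈ s, g (v b) = γ b := fun b hb =>
    edist_eq_zero.mp (edist_naturalParameterization_eq_zero hlbv h01 hb)
  have hUS : HasConstantSpeedOnWith g (Icc 0 ℓr) 1 := by
    have := has_unit_speed_naturalParameterization γ hlbv h01
    rwa [HasUnitSpeedOn, himg] at this
  have hmemℓ : ℓr ∈ Icc 0 ℓr := ⟨hℓr0, le_rfl⟩
  have hmem0 : (0:ℝ) ∈ Icc 0 ℓr := ⟨le_rfl, hℓr0⟩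
  have hgl : LipschitzOnWith 1 g (Icc 0 ℓr) := by
    intro p hp' q hq'
    rcases le_total p q with hpq | hpq
    · have h1 : edist (g p) (g q) ≤ eVariationOn g (Icc 0 ℓr ∩ Icc p q) :=
        eVariationOn.edist_le g ⟨hp', le_rfl, hpq⟩ ⟨hq', hpq, le_rfl⟩
      rw [hUS hp' hq'] at h1
      calc edist (g p) (g q) ≤ ENNReal.ofReal (1 * (q - p)) := h1
        _ ≤ 1 * edist p q := by
            rw [one_mul, one_mul, edist_dist, Real.dist_eq]
            exact ENNReal.ofReal_le_ofReal (le_abs_self _ |>.trans (by rw [abs_sub_comm]))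
    · have h1 : edist (g p) (g q) ≤ eVariationOn g (Icc 0 ℓr ∩ Icc q p) :=
        edist_comm (g p) (g q) ▸ eVariationOn.edist_le g ⟨hq', le_rfl, hpq⟩ ⟨hp', hpq, le_rfl⟩
      rw [hUS hq' hp'] at h1
      calc edist (g p) (g q) ≤ ENNReal.ofReal (1 * (p - q)) := h1
        _ ≤ 1 * edist p q := by
            rw [one_mul, one_mul, edist_dist, Real.dist_eq]
            exact ENNReal.ofReal_le_ofReal (le_abs_self _)
  set clamp : ℝ → ℝ := fun t => min 1 (max 0 t) with hclamp
  have hclamp_mono : Monotone clamp := fun p q hpq =>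
    min_le_min le_rfl (max_le_max le_rfl hpq)
  have hclamp_mem : ∀ t, clamp t ∈ Icc (0:ℝ) 1 := fun t =>
    ⟨le_min zero_le_one (le_max_left 0 t), min_le_left _ _⟩
  have hclamp_lip : LipschitzWith 1 clamp := (LipschitzWith.id.const_max 0).const_min 1
  set ψ : ℝ → ℝ := fun t => ℓr * clamp t with hψ
  have hψmem : ∀ t, ψ t ∈ Icc 0 ℓr := fun t =>
    ⟨mul_nonneg hℓr0 (hclamp_mem t).1, mul_le_of_le_one_right hℓr0 (hclamp_mem t).2⟩
  have hψmono : Monotone ψ := fun p q hpq =>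
    mul_le_mul_of_nonneg_left (hclamp_mono hpq) hℓr0
  have hψlip : LipschitzWith ℓ.toNNReal ψ := by
    apply LipschitzWith.of_dist_le_mul
    intro p q
    have h1 : dist (clamp p) (clamp q) ≤ 1 * dist p q := hclamp_lip.dist_le_mul p q
    have hcoe : (ℓ.toNNReal : ℝ) = ℓr := rfl
    rw [hcoe]
    calc dist (ψ p) (ψ q) = |ℓr * clamp p - ℓr * clamp q| := by rw [Real.dist_eq]
      _ = ℓr * |clamp p - clamp q| := by rw [← mul_sub, abs_mul, abs_of_nonneg hℓr0]
      _ ≤ ℓr * dist p q := by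
          apply mul_le_mul_of_nonneg_left _ hℓr0
          rw [← Real.dist_eq]
          linarith [hclamp_lip.dist_le_mul p q]
  refine ⟨g ∘ ψ, ?_, ?_, ?_, ?_⟩
  · rw [← lipschitzOnWith_univ]
    have := hgl.comp (hψlip.lipschitzOnWith (s := univ)) (fun t _ => hψmem t)
    rwa [one_mul] at this
  · show g (ψ 0) = x
    have : ψ 0 = 0 := by simp [hψ, hclamp]
    rw [this, ← hv0, hgv 0 h01, hp.2.1]
  · show g (ψ 1) = y
    have : ψ 1 = ℓr := by simp [hψ, hclamp]
    rw [this, ← hv1, hgv 1 h11, hp.2.2]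
  · have h1 : eVariationOn (g ∘ ψ) s ≤ eVariationOn g (Icc 0 ℓr) :=
      eVariationOn.comp_le_of_monotoneOn g ψ (hψmono.monotoneOn s) (fun t _ => hψmem t)
    have h2 : eVariationOn g (Icc 0 ℓr) = ℓ := by
      have := hUS hmem0 hmemℓ
      rw [inter_self] at this
      rw [this, NNReal.coe_one, one_mul, sub_zero, ENNReal.ofReal_toReal hfin]
    exact h2 ▸ h1

private lemma intrinsicDist_le_eVariationOn {γ : ℝ → X} (hγ : Continuous γ) {p q : ℝ} (hpq : p ≤ q) :
    intrinsicDist X (γ p) (γ q) ≤ eVariationOn γ (Icc p q) := by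
  set φ : ℝ → ℝ := fun r => p + r * (q - p) with hφ
  have hpath : IsPath X (γ ∘ φ) (γ p) (γ q) := by
    refine ⟨(hγ.comp (by continuity)).continuousOn, ?_, ?_⟩
    · show γ (p + 0 * (q - p)) = γ p
      norm_num
    · show γ (p + 1 * (q - p)) = γ q
      norm_num
  refine le_trans (iInf_le _ ⟨γ ∘ φ, hpath⟩) ?_
  apply eVariationOn.comp_le_of_monotoneOn γ φ
  · intro r1 _ r2 _ h
    exact add_le_add_right (mul_le_mul_of_nonneg_right h (sub_nonneg.2 hpq)) p
  · intro r hr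
    constructor
    · exact le_add_of_nonneg_right (mul_nonneg hr.1 (sub_nonneg.2 hpq))
    · have := mul_le_of_le_one_left (sub_nonneg.2 hpq) hr.2
      show p + r * (q - p) ≤ q
      linarith

private lemma sum_eVar_le (γ : ℝ → X) (u : ℕ → ℝ) (hu : Monotone u) (n : ℕ) :
    (∑ i ∈ Finset.range n, eVariationOn γ (Icc (u i) (u (i + 1)))) ≤
      eVariationOn γ (Icc (u 0) (u n)) := by
  induction n with
  | zero => simp
  | succ n ih =>
    rw [Finset.sum_range_succ]
    calc _ ≤ eVariationOn γ (Icc (u 0) (u n)) + eVariationOn γ (Icc (u n) (u (n + 1))) :=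
          add_le_add_left ih _
      _ = _ := Icc_add_Icc' γ (hu (Nat.zero_le n)) (hu (Nat.le_succ n))


private lemma isClosed_sublevel (c : ℝ≥0∞) :
    IsClosed {γ : ℝ → X | eVariationOn γ (Set.Icc 0 1) ≤ c} := by
  rw [← isOpen_compl_iff]
  rw [isOpen_iff_mem_nhds]
  intro f hf
  rw [mem_compl_iff, mem_setOf_eq, not_le] at hf
  have h := eVariationOn.lowerSemicontinuous_aux (ι := ℝ → X) (F := fun g => g) (p := 𝓝 f)
    (f := f) (s := Set.Icc 0 1) (fun x _ => ((continuous_apply x).tendsto f)) hf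
  filter_upwards [h] with g hg
  rw [mem_compl_iff, mem_setOf_eq, not_le]
  exact hg


end Aux

set_option maxHeartbeats 1000000 in
/-- In a compact metric space in which any two points are joined by a rectifiable path,
any two points are joined by a shortest path, whose length realizes the intrinsic
metric `d'`; consequently `(X, d')` is a geodesic space: this path's length computed
with respect to `d'` (which equals its length with respect to `d`) equals `d'(x,y)`. -/
theorem exists_shortest_path_and_intrinsic_geodesic (X : Type*) [MetricSpace X]
    [CompactSpace X]
    (hrect : ∀ x y : X, ∃ γ : ℝ → X, IsPath X γ x y ∧ eVariationOn γ (Set.Icc 0 1) ≠ ⊤) :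
    ∀ x y : X, ∃ γ : ℝ → X, IsPath X γ x y ∧
      eVariationOn γ (Set.Icc 0 1) = intrinsicDist X x y ∧
      variationWith (intrinsicDist X) γ (Set.Icc 0 1) = intrinsicDist X x y := by
  intro x y
  obtain ⟨γ₀, hp0, hf0⟩ := hrect x y
  set L : ℝ≥0∞ := intrinsicDist X x y with hL
  have hLle : L ≤ eVariationOn γ₀ (Set.Icc 0 1) :=
    iInf_le (fun γ : { γ : ℝ → X // IsPath X γ x y } => eVariationOn γ.1 (Set.Icc 0 1)) ⟨γ₀, hp0⟩
  have hLfin : L ≠ ⊤ := fun h => hf0 (top_le_iff.mp (h ▸ hLle))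
  set K : ℝ≥0 := (L + 1).toNNReal with hK
  set S : ℕ → Set (ℝ → X) := fun n =>
    {γ | LipschitzWith K γ ∧ γ 0 = x ∧ γ 1 = y ∧
      eVariationOn γ (Set.Icc 0 1) ≤ L + (((n:ℝ≥0∞) + 1))⁻¹} with hS
  have hL1fin : L + 1 ≠ ⊤ := by
    rw [ENNReal.add_ne_top]
    exact ⟨hLfin, ENNReal.one_ne_top⟩
  -- nonempty
  have hne : ∀ n, (S n).Nonempty := by
    intro n
    have hinvne : ((n:ℝ≥0∞) + 1)⁻¹ ≠ 0 := by
      apply ENNReal.inv_ne_zero.mpr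
      exact ENNReal.add_ne_top.mpr ⟨ENNReal.natCast_ne_top n, ENNReal.one_ne_top⟩
    have hlt : L < L + ((n:ℝ≥0∞) + 1)⁻¹ := ENNReal.lt_add_right hLfin hinvne
    rw [hL, intrinsicDist] at hlt
    obtain ⟨⟨γ₁, hp1⟩, hvar1⟩ := iInf_lt_iff.mp hlt
    simp only at hvar1
    have hfin1 : eVariationOn γ₁ (Set.Icc 0 1) ≠ ⊤ := hvar1.ne_top
    obtain ⟨δ, hδlip, hδ0, hδ1, hδvar⟩ := exists_lipschitz_path hp1 hfin1
    refine ⟨δ, ?_, hδ0, hδ1, hδvar.trans hvar1.le⟩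
    apply hδlip.weaken
    apply ENNReal.toNNReal_mono hL1fin
    apply hvar1.le.trans
    apply add_le_add_right
    apply ENNReal.inv_le_one.mpr
    exact le_add_self
  have hclosed : ∀ n, IsClosed (S n) := by
    intro n
    have h1 : IsClosed {γ : ℝ → X | LipschitzWith K γ} := by
      have : {γ : ℝ → X | LipschitzWith K γ} =
          ⋂ (p : ℝ) (q : ℝ), {γ : ℝ → X | edist (γ p) (γ q) ≤ K * edist p q} := by
        ext γ
        simp only [mem_setOf_eq, mem_iInter, LipschitzWith]
      rw [this]
      exact isClosed_iInter fun p => isClosed_iInter fun q =>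
        isClosed_le (((continuous_apply p).edist (continuous_apply q))) continuous_const
    have h2 : IsClosed {γ : ℝ → X | γ 0 = x} :=
      isClosed_eq (continuous_apply 0) continuous_const
    have h3 : IsClosed {γ : ℝ → X | γ 1 = y} :=
      isClosed_eq (continuous_apply 1) continuous_const
    have h4 := isClosed_sublevel (X := X) (L + ((n:ℝ≥0∞) + 1)⁻¹)
    have : S n = {γ : ℝ → X | LipschitzWith K γ} ∩ ({γ | γ 0 = x} ∩ ({γ | γ 1 = y} ∩
        {γ : ℝ → X | eVariationOn γ (Set.Icc 0 1) ≤ L + ((n:ℝ≥0∞) + 1)⁻¹})) := by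
      ext γ
      simp only [hS, mem_setOf_eq, mem_inter_iff, and_assoc]
    rw [this]
    exact h1.inter (h2.inter (h3.inter h4))
  have hdec : ∀ n, S (n + 1) ⊆ S n := by
    intro n γ hγ
    refine ⟨hγ.1, hγ.2.1, hγ.2.2.1, hγ.2.2.2.trans ?_⟩
    apply add_le_add_right
    exact ENNReal.inv_le_inv.mpr (by gcongr; exact_mod_cast Nat.le_succ n)
  obtain ⟨γs, hγs⟩ := IsCompact.nonempty_iInter_of_sequence_nonempty_isCompact_isClosed S
    hdec hne ((hclosed 0).isCompact) hclosed
  simp only [mem_iInter] at hγs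
  have hlip : LipschitzWith K γs := (hγs 0).1
  have hpath : IsPath X γs x y := ⟨hlip.continuous.continuousOn, (hγs 0).2.1, (hγs 0).2.2.1⟩
  have hvar_le : eVariationOn γs (Set.Icc 0 1) ≤ L := by
    apply ENNReal.le_of_forall_pos_le_add
    intro ε hε _
    obtain ⟨n, hn⟩ := ENNReal.exists_inv_nat_lt (by exact_mod_cast hε.ne' : (ε : ℝ≥0∞) ≠ 0)
    calc eVariationOn γs (Set.Icc 0 1) ≤ L + ((n:ℝ≥0∞) + 1)⁻¹ := (hγs n).2.2.2
      _ ≤ L + (n:ℝ≥0∞)⁻¹ := add_le_add_right (ENNReal.inv_le_inv.mpr le_self_add) L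
      _ ≤ L + ε := add_le_add_right hn.le L
  have hvar_ge : L ≤ eVariationOn γs (Set.Icc 0 1) :=
    iInf_le (fun γ : { γ : ℝ → X // IsPath X γ x y } => eVariationOn γ.1 (Set.Icc 0 1)) ⟨γs, hpath⟩
  have hvar_eq : eVariationOn γs (Set.Icc 0 1) = L := le_antisymm hvar_le hvar_ge
  refine ⟨γs, hpath, hvar_eq, le_antisymm ?_ ?_⟩
  · -- variationWith ≤ L
    apply iSup_le
    rintro ⟨n, u, hu, hus⟩
    simp only
    calc (∑ i ∈ Finset.range n, intrinsicDist X (γs (u i)) (γs (u (i + 1))))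
        ≤ ∑ i ∈ Finset.range n, eVariationOn γs (Icc (u i) (u (i + 1))) :=
          Finset.sum_le_sum fun i _ =>
            intrinsicDist_le_eVariationOn hlip.continuous (hu (Nat.le_succ i))
      _ ≤ eVariationOn γs (Icc (u 0) (u n)) := sum_eVar_le γs u hu n
      _ ≤ eVariationOn γs (Set.Icc 0 1) :=
          eVariationOn.mono γs (Icc_subset_Icc (hus 0).1 (hus n).2)
      _ = L := hvar_eq
  · -- L ≤ variationWith
    set u : ℕ → ℝ := fun i => min (i : ℝ) 1 with hu
    have humono : Monotone u := fun p q hpq =>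
      min_le_min (by exact_mod_cast hpq) le_rfl
    have humem : ∀ i, u i ∈ Set.Icc (0:ℝ) 1 :=
      fun i => ⟨le_min (Nat.cast_nonneg i) zero_le_one, min_le_right _ _⟩
    have := le_iSup (fun p : ℕ × { u : ℕ → ℝ // Monotone u ∧ ∀ i, u i ∈ Set.Icc (0:ℝ) 1 } =>
      ∑ i ∈ Finset.range p.1, intrinsicDist X (γs (p.2.1 i)) (γs (p.2.1 (i + 1))))
      ⟨1, ⟨u, humono, humem⟩⟩
    simp only [Finset.range_one, Finset.sum_singleton] at this
    have hu0 : u 0 = 0 := by simp [hu]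
    have hu1 : u 1 = 1 := by simp [hu]
    rw [hu0, hu1, hpath.2.1, hpath.2.2] at this
    exact this

end IntrinsicMetric
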